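/- If x is a favorite edge at time n (i.e., x ∈ 𝒦(n)), then x−1 is a favorite downcrossing site at time n (i.e., ξ_D(x−1,n) = sup_{y∈ℤ} ξ_D(y,n)). -/
import Mathlib


/-- Number of downcrossings of site `x` by time `n`. -/
def xiD (S : ℕ → ℤ) (x : ℤ) (n : ℕ) : ℕ :=
  ((Finset.Icc 1 n).filter (fun k => S k = x ∧ S (k - 1) = x + 1)).card

/-- Edge local time. -/
def edgeLT (S : ℕ → ℤ) (x : ℤ) (n : ℕ) : ℕ :=
  ((Finset.Icc 1 n).filter (fun j => S j + S (j - 1) + 1 = 2 * x)).card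

/-- Number of upcrossings from `x` to `x+1` by time `n`. -/
def upC (S : ℕ → ℤ) (x : ℤ) (n : ℕ) : ℕ :=
  ((Finset.Icc 1 n).filter (fun k => S k = x + 1 ∧ S (k - 1) = x)).card

private lemma card_filter_succ (P : ℕ → Prop) [DecidablePred P] (n : ℕ) :
    ((Finset.Icc 1 (n + 1)).filter P).card
      = ((Finset.Icc 1 n).filter P).card + (if P (n + 1) then 1 else 0) := by
  have h : Finset.Icc 1 (n + 1) = insert (n + 1) (Finset.Icc 1 n) := by
    ext k; simp [Finset.mem_Icc]; omega
  rw [h, Finset.filter_insert]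
  split_ifs with hP
  · rw [Finset.card_insert_of_notMem (by simp [Finset.mem_Icc])]
  · simp

private lemma cross_diff (S : ℕ → ℤ) (hS0 : S 0 = 0)
    (hstep : ∀ k : ℕ, |S (k + 1) - S k| = 1) (x : ℤ) (n : ℕ) :
    (upC S x n : ℤ) - xiD S x n =
      (if x < S n ∧ 0 ≤ x then 1 else 0) - (if S n ≤ x ∧ x < 0 then 1 else 0) := by
  induction n with
  | zero => simp [upC, xiD, hS0]; split_ifs <;> omega
  | succ n ih =>
      have hd := hstep n
      have hd' : S (n + 1) - S n = 1 ∨ S (n + 1) - S n = -1 := abs_eq (by norm_num) |>.mp hd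
      rw [upC, xiD, card_filter_succ, card_filter_succ]
      rw [upC, xiD] at ih
      push_cast
      try simp only [Nat.add_sub_cancel]
      split_ifs at ih ⊢ <;> omega

private lemma edgeLT_eq (S : ℕ → ℤ)
    (hstep : ∀ k : ℕ, |S (k + 1) - S k| = 1) (y : ℤ) (n : ℕ) :
    edgeLT S y n = upC S (y - 1) n + xiD S (y - 1) n := by
  induction n with
  | zero => simp [edgeLT, upC, xiD]
  | succ n ih =>
      have hd := hstep n
      have hd' : S (n + 1) - S n = 1 ∨ S (n + 1) - S n = -1 := abs_eq (by norm_num) |>.mp hd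
      rw [edgeLT, upC, xiD, card_filter_succ, card_filter_succ, card_filter_succ]
      rw [edgeLT, upC, xiD] at ih
      try simp only [Nat.add_sub_cancel]
      split_ifs <;> omega

theorem stmt2 (S : ℕ → ℤ) (hS0 : S 0 = 0)
    (hstep : ∀ k : ℕ, |S (k + 1) - S k| = 1) (x : ℤ) (n : ℕ)
    (hx : ∀ y : ℤ, edgeLT S y n ≤ edgeLT S x n) :
    ∀ y : ℤ, xiD S y n ≤ xiD S (x - 1) n := by
  intro z
  have h1 := hx (z + 1)
  have e1 := edgeLT_eq S hstep x n
  have e2 := edgeLT_eq S hstep (z + 1) n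
  have c1 := cross_diff S hS0 hstep (x - 1) n
  have c2 := cross_diff S hS0 hstep z n
  have hz : z + 1 - 1 = z := by ring
  rw [hz] at e2
  rw [e1, e2] at h1
  have h1' : (upC S z n : ℤ) + xiD S z n ≤ (upC S (x - 1) n : ℤ) + xiD S (x - 1) n := by
    exact_mod_cast h1
  split_ifs at c1 c2 <;> omega
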